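/- In any Coxeter system (W, S), let s ∈ S and let w be a reduced word in the generators S \ {s} representing an element that commutes with s in W. Then every letter of w commutes with s (i.e., has m(s,t) = 2 for every letter t of w). -/

import Mathlib

namespace CoxLemma52

open List CoxeterSystem

open scoped Classical

noncomputable section

variable {B W : Type*} [Group W] {M : CoxeterMatrix B} (cs : CoxeterSystem M W)

/-! ### Part I: permutation representation on `W × ℤˣ` -/

def permFun (i : B) : W × ℤˣ → W × ℤˣ :=
  fun x => (cs.simple i * x.1 * cs.simple i, if x.1 = cs.simple i then -x.2 else x.2)

lemma permFun_apply (i : B) (t : W) (ε : ℤˣ) :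
    permFun cs i (t, ε) = (cs.simple i * t * cs.simple i,
      if t = cs.simple i then -ε else ε) := rfl

lemma simple_conj_simple (i : B) (t : W) :
    cs.simple i * (cs.simple i * t * cs.simple i) * cs.simple i = t := by
  rw [← mul_assoc, ← mul_assoc, cs.simple_mul_simple_self, one_mul, mul_assoc,
    cs.simple_mul_simple_self, mul_one]

lemma simple_conj_eq_iff (i : B) (t : W) :
    cs.simple i * t * cs.simple i = cs.simple i ↔ t = cs.simple i := by
  constructor
  · intro h
    calc t = cs.simple i * (cs.simple i * t * cs.simple i) * cs.simple i :=
          (simple_conj_simple cs i t).symm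
    _ = cs.simple i * cs.simple i * cs.simple i := by rw [h]
    _ = cs.simple i := by rw [cs.simple_mul_simple_self, one_mul]
  · rintro rfl
    rw [cs.simple_mul_simple_self, one_mul]

lemma permFun_involutive (i : B) : Function.Involutive (permFun cs i) := by
  rintro ⟨t, ε⟩
  simp only [permFun, simple_conj_eq_iff, simple_conj_simple]
  by_cases ht : t = cs.simple i
  · simp [ht]
  · simp [ht]

def permK (i : B) : Equiv.Perm (W × ℤˣ) := (permFun_involutive cs i).toPerm

lemma permK_apply (i : B) (x : W × ℤˣ) : permK cs i x = permFun cs i x := rfl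

lemma rightInvSeq_cons (i : B) (ω : List B) :
    cs.rightInvSeq (i :: ω) =
      ((cs.wordProd ω)⁻¹ * cs.simple i * cs.wordProd ω) :: cs.rightInvSeq ω := rfl

lemma prod_permK_apply (ω : List B) (t : W) (ε : ℤˣ) :
    ((ω.map (permK cs)).prod) (t, ε) =
      (cs.wordProd ω * t * (cs.wordProd ω)⁻¹,
        (-1) ^ ((cs.rightInvSeq ω).count t) * ε) := by
  induction ω generalizing t ε with
  | nil => simp
  | cons i ω ih =>
    rw [List.map_cons, List.prod_cons, Equiv.Perm.mul_apply, ih, permK_apply, permFun_apply]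
    have hcond : (cs.wordProd ω * t * (cs.wordProd ω)⁻¹ = cs.simple i)
        ↔ ((cs.wordProd ω)⁻¹ * cs.simple i * cs.wordProd ω = t) := by
      constructor
      · intro h; rw [← h]; group
      · intro h; rw [← h]; group
    have hfst : cs.simple i * (cs.wordProd ω * t * (cs.wordProd ω)⁻¹) * cs.simple i
        = cs.wordProd (i :: ω) * t * (cs.wordProd (i :: ω))⁻¹ := by
      rw [cs.wordProd_cons, mul_inv_rev, cs.inv_simple]
      group
    rw [rightInvSeq_cons]
    by_cases hc : (cs.wordProd ω)⁻¹ * cs.simple i * cs.wordProd ω = t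
    · rw [if_pos (hcond.mpr hc)]
      refine Prod.ext hfst ?_
      simp only [List.count_cons, beq_iff_eq, if_pos hc, pow_succ]
      rw [mul_neg_one, neg_mul]
    · rw [if_neg (fun h => hc (hcond.mp h))]
      refine Prod.ext hfst ?_
      simp only [List.count_cons, beq_iff_eq, if_neg hc, add_zero]

section altword

variable (i j : B)

private lemma pow_mul_simple (a : ℕ) :
    (cs.simple i * cs.simple j) ^ a * cs.simple j
      = cs.simple j * ((cs.simple i * cs.simple j)⁻¹) ^ a := by
  induction a with
  | zero => simp
  | succ a iha =>
    rw [pow_succ, mul_assoc _ (cs.simple i * cs.simple j) (cs.simple j),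
      mul_assoc (cs.simple i) (cs.simple j) (cs.simple j), cs.simple_mul_simple_self, mul_one,
      pow_succ, ← mul_assoc, ← iha, mul_assoc, mul_inv_rev, cs.inv_simple, cs.inv_simple,
      ← mul_assoc (cs.simple j) (cs.simple j) (cs.simple i), cs.simple_mul_simple_self, one_mul]

/-- The product of the alternating word grows by `s j * (s i * s j) ^ n` on the right. -/
lemma wordProd_alt_succ (n : ℕ) :
    cs.wordProd (alternatingWord i j (n + 1)) =
      cs.wordProd (alternatingWord i j n)
        * (cs.simple j * (cs.simple i * cs.simple j) ^ n) := by
  rw [cs.prod_alternatingWord_eq_mul_pow, cs.prod_alternatingWord_eq_mul_pow]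
  by_cases hn : Even n
  · obtain ⟨b, hb⟩ := hn
    have hn1 : ¬ Even (n + 1) := by simp [Nat.even_add_one]; exact ⟨b, hb⟩
    rw [if_neg hn1, if_pos ⟨b, hb⟩, one_mul]
    rw [show (n+1)/2 = b by omega, show n/2 = b by omega, hb]
    rw [← mul_assoc, pow_mul_simple, pow_add, mul_assoc, inv_pow, inv_mul_cancel_left]
  · have hn1 : Even (n + 1) := Nat.even_add_one.mpr hn
    obtain ⟨b, hb⟩ := hn1
    rw [if_pos ⟨b, hb⟩, if_neg hn, one_mul]
    rw [show (n+1)/2 = b by omega, show n/2 = b - 1 by omega,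
      show n = (b - 1) + b by omega]
    rw [mul_assoc, ← mul_assoc _ (cs.simple j) _, pow_mul_simple, mul_assoc, ← mul_assoc,
      cs.simple_mul_simple_self, one_mul, inv_pow, pow_add, inv_mul_cancel_left]

lemma ris_alternatingWord (n : ℕ) :
    cs.rightInvSeq (alternatingWord i j n) =
      ((List.range n).map
        (fun k => cs.simple j * (cs.simple i * cs.simple j) ^ k)).reverse := by
  induction n with
  | zero => simp [alternatingWord]
  | succ n ih =>
    rw [alternatingWord_succ', rightInvSeq_cons, ih, List.range_succ, List.map_append,
      List.reverse_append]
    simp only [List.map_cons, List.map_nil, List.reverse_cons, List.reverse_nil,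
      List.nil_append, List.cons_append, List.singleton_append]
    congr 1
    have hs : cs.simple (if Even n then j else i)
        = cs.wordProd (alternatingWord i j (n+1)) * (cs.wordProd (alternatingWord i j n))⁻¹ := by
      rw [alternatingWord_succ', cs.wordProd_cons, mul_assoc, mul_inv_cancel, mul_one]
    rw [hs, wordProd_alt_succ]
    group

end altword

lemma count_ris_alt_even (i j : B) (t : W) :
    Even ((cs.rightInvSeq (alternatingWord i j (2 * M i j))).count t) := by
  rw [ris_alternatingWord, List.count_reverse]
  rw [show 2 * M i j = M i j + M i j by omega, List.range_add, List.map_append]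
  have hmap : (List.map (fun k => cs.simple j * (cs.simple i * cs.simple j) ^ k)
      (List.map (fun k => M i j + k) (List.range (M i j))))
      = List.map (fun k => cs.simple j * (cs.simple i * cs.simple j) ^ k)
        (List.range (M i j)) := by
    rw [List.map_map]
    refine List.map_congr_left fun k _ => ?_
    simp only [Function.comp_apply]
    rw [pow_add, cs.simple_mul_simple_pow i j, one_mul]
  rw [hmap, List.count_append]
  exact ⟨_, rfl⟩

lemma permK_pow_eq (i j : B) (m : ℕ) :
    (permK cs i * permK cs j) ^ m = ((alternatingWord i j (2 * m)).map (permK cs)).prod := by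
  induction m with
  | zero => simp [alternatingWord]
  | succ m ih =>
    have h2 : alternatingWord i j (2 * (m+1))
        = i :: j :: alternatingWord i j (2 * m) := by
      rw [show 2 * (m+1) = (2*m+1)+1 by omega, alternatingWord_succ' i j (2*m+1),
        alternatingWord_succ' i j (2*m)]
      have ho : ¬ Even (2 * m + 1) := by simp [Nat.even_add_one, parity_simps]
      rw [if_neg ho, if_pos ⟨m, by omega⟩]
    rw [h2, pow_succ', ih, List.map_cons, List.map_cons, List.prod_cons, List.prod_cons,
      mul_assoc]

lemma permK_liftable : M.IsLiftable (permK cs) := by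
  intro i j
  rw [permK_pow_eq]
  apply Equiv.ext
  rintro ⟨t, ε⟩
  rw [prod_permK_apply]
  have hprod : cs.wordProd (alternatingWord i j (2 * M i j)) = 1 := by
    rw [cs.prod_alternatingWord_eq_mul_pow, if_pos ⟨M i j, by omega⟩]
    rw [show 2 * M i j / 2 = M i j by omega, one_mul, cs.simple_mul_simple_pow]
  have hcount := count_ris_alt_even cs i j t
  rw [hprod, (Even.neg_one_pow hcount : ((-1 : ℤˣ)) ^ _ = 1)]
  simp

/-! ### The homomorphism and the parity function η -/

def pRep : W →* Equiv.Perm (W × ℤˣ) := cs.lift ⟨permK cs, permK_liftable cs⟩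

lemma pRep_simple (i : B) : pRep cs (cs.simple i) = permK cs i :=
  cs.lift_apply_simple (permK_liftable cs) i

lemma pRep_wordProd (ω : List B) : pRep cs (cs.wordProd ω) = ((ω.map (permK cs)).prod) := by
  induction ω with
  | nil => simp [cs.wordProd_nil]
  | cons i ω ih => rw [cs.wordProd_cons, map_mul, pRep_simple, ih, List.map_cons, List.prod_cons]

lemma pRep_apply_wordProd (ω : List B) (t : W) (ε : ℤˣ) :
    pRep cs (cs.wordProd ω) (t, ε) =
      (cs.wordProd ω * t * (cs.wordProd ω)⁻¹,
        (-1) ^ ((cs.rightInvSeq ω).count t) * ε) := by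
  rw [pRep_wordProd, prod_permK_apply]

def eta (w t : W) : ℤˣ := (pRep cs w (t, 1)).2

lemma eta_eq_count (ω : List B) (t : W) :
    eta cs (cs.wordProd ω) t = (-1) ^ ((cs.rightInvSeq ω).count t) := by
  unfold eta
  rw [pRep_apply_wordProd, mul_one]

lemma pRep_apply (w t : W) (ε : ℤˣ) :
    pRep cs w (t, ε) = (w * t * w⁻¹, eta cs w t * ε) := by
  obtain ⟨ω, rfl⟩ := cs.wordProd_surjective w
  rw [pRep_apply_wordProd, eta_eq_count]

lemma eta_mul (x y t : W) :
    eta cs (x * y) t = eta cs y t * eta cs x (y * t * y⁻¹) := by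
  have h2 : pRep cs (x * y) (t, 1) = pRep cs x (pRep cs y (t, 1)) := by
    rw [map_mul]; rfl
  rw [pRep_apply cs y t 1, pRep_apply cs x] at h2
  have h3 := congrArg Prod.snd h2
  simp only [mul_one] at h3
  show (pRep cs (x * y) (t, 1)).2 = eta cs y t * eta cs x (y * t * y⁻¹)
  rw [h3, mul_comm]

lemma eta_simple_self (i : B) : eta cs (cs.simple i) (cs.simple i) = -1 := by
  have h : cs.simple i = cs.wordProd [i] := by simp
  rw [h, eta_eq_count]
  have : (cs.rightInvSeq [i]).count (cs.wordProd [i]) = 1 := by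
    simp [rightInvSeq_cons]
  rw [this, pow_one]

lemma eta_one (t : W) : eta cs 1 t = 1 := by
  have h : (1 : W) = cs.wordProd [] := by simp
  rw [h, eta_eq_count]
  simp

lemma eta_sq (w t : W) : eta cs w t * eta cs w t = 1 := by
  rcases Int.units_eq_one_or (eta cs w t) with h | h <;> rw [h] <;> rfl

lemma eta_inv_conj (w t : W) : eta cs w⁻¹ (w * t * w⁻¹) = eta cs w t := by
  have h := eta_mul cs w⁻¹ w t
  rw [inv_mul_cancel, eta_one] at h
  have h2 := congrArg (fun z => eta cs w t * z) h
  simp only [mul_one, ← mul_assoc, eta_sq, one_mul] at h2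
  exact h2.symm

lemma eta_reflection_self {t : W} (ht : cs.IsReflection t) : eta cs t t = -1 := by
  obtain ⟨w, i, rfl⟩ := ht
  have key : eta cs (w * cs.simple i * w⁻¹) (w * cs.simple i * w⁻¹)
      = eta cs w⁻¹ (w * cs.simple i * w⁻¹)
        * eta cs (w * cs.simple i) (w⁻¹ * (w * cs.simple i * w⁻¹) * w⁻¹⁻¹) := by
    rw [← eta_mul cs (w * cs.simple i) w⁻¹]
  have h1 : w⁻¹ * (w * cs.simple i * w⁻¹) * w⁻¹⁻¹ = cs.simple i := by group
  have h2 : eta cs (w * cs.simple i) (cs.simple i)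
      = eta cs (cs.simple i) (cs.simple i)
        * eta cs w (cs.simple i * cs.simple i * (cs.simple i)⁻¹) := eta_mul cs w (cs.simple i) _
  have h3 : cs.simple i * cs.simple i * (cs.simple i)⁻¹ = cs.simple i := by group
  rw [key, h1, h2, h3, eta_simple_self, eta_inv_conj, neg_one_mul, mul_neg, eta_sq]

/-! ### Exchange-type consequences -/

lemma length_mul_lt_of_eta_neg {w t : W} (h : eta cs w t = -1) :
    cs.length (w * t) < cs.length w := by
  obtain ⟨ω, hred, rfl⟩ := cs.exists_reduced_word' w
  rw [eta_eq_count] at h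
  have hodd : (cs.rightInvSeq ω).count t ≠ 0 := by
    intro hc
    rw [hc, pow_zero] at h
    exact absurd h (by decide)
  have hmem : t ∈ cs.rightInvSeq ω := by
    by_contra hmem
    exact hodd (List.count_eq_zero.mpr hmem)
  obtain ⟨jj, hj, hget⟩ := List.mem_iff_getElem.mp hmem
  have hj' : jj < ω.length := by simpa using hj
  have hgd : (cs.rightInvSeq ω).getD jj 1 = t := by
    rw [List.getD_eq_getElem _ 1 hj, hget]
  have heq : cs.wordProd ω * t = cs.wordProd (ω.eraseIdx jj) := by
    rw [← hgd, cs.wordProd_mul_getD_rightInvSeq]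
  rw [heq]
  calc cs.length (cs.wordProd (ω.eraseIdx jj)) ≤ (ω.eraseIdx jj).length :=
        cs.length_wordProd_le _
    _ < ω.length := by rw [← List.length_eraseIdx_add_one hj']; omega
    _ = cs.length (cs.wordProd ω) := hred.symm

lemma eta_neg_of_length_mul_lt {w t : W} (ht : cs.IsReflection t)
    (h : cs.length (w * t) < cs.length w) : eta cs w t = -1 := by
  by_contra h'
  have h1 : eta cs w t = 1 := (Int.units_eq_one_or _).resolve_right h'
  have h2 : eta cs (w * t) t = -1 := by
    rw [eta_mul]
    have htt : t * t * t⁻¹ = t := by group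
    rw [htt, eta_reflection_self cs ht, h1, mul_one]
  have h3 := length_mul_lt_of_eta_neg cs h2
  rw [mul_assoc, ht.mul_self, mul_one] at h3
  omega

lemma mem_leftInvSeq_of_isLeftInversion {w t : W} (ht : cs.IsLeftInversion w t)
    (ω : List B) (hω : cs.wordProd ω = w) : t ∈ cs.leftInvSeq ω := by
  obtain ⟨htr, hlen⟩ := ht
  have h1 : cs.length (w⁻¹ * t) < cs.length w⁻¹ := by
    have e1 : cs.length (w⁻¹ * t) = cs.length (t * w) := by
      rw [← cs.length_inv (w⁻¹ * t), mul_inv_rev, inv_inv, htr.inv]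
    rw [e1, cs.length_inv]
    exact hlen
  have h2 : eta cs w⁻¹ t = -1 := eta_neg_of_length_mul_lt cs htr h1
  have h3 : cs.wordProd ω.reverse = w⁻¹ := by rw [cs.wordProd_reverse, hω]
  rw [← h3, eta_eq_count] at h2
  have hodd : (cs.rightInvSeq ω.reverse).count t ≠ 0 := by
    intro hc
    rw [hc, pow_zero] at h2
    exact absurd h2 (by decide)
  have hmem : t ∈ cs.rightInvSeq ω.reverse := by
    by_contra hmem
    exact hodd (List.count_eq_zero.mpr hmem)
  rw [cs.rightInvSeq_reverse, List.mem_reverse] at hmem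
  exact hmem

/-! ### Part II: the geometric representation over `ℂ` -/

def kM (M : CoxeterMatrix B) (i j : B) : ℂ := -(Real.cos (Real.pi / M i j) : ℝ)

lemma kM_symm (i j : B) : kM M i j = kM M j i := by
  unfold kM
  rw [M.symmetric i j]

lemma kM_self (i : B) : kM M i i = 1 := by
  unfold kM
  rw [M.diagonal i, Nat.cast_one, div_one, Real.cos_pi]
  norm_num

def phiGR (M : CoxeterMatrix B) (i : B) : (B →₀ ℂ) →ₗ[ℂ] ℂ :=
  Finsupp.linearCombination ℂ (fun j => kM M i j)

lemma phiGR_single (i j : B) (c : ℂ) :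
    phiGR M i (Finsupp.single j c) = c * kM M i j := by
  unfold phiGR
  rw [Finsupp.linearCombination_single, smul_eq_mul]

def sigmaGR (M : CoxeterMatrix B) (i : B) : Module.End ℂ (B →₀ ℂ) :=
  LinearMap.id - (phiGR M i).smulRight ((2:ℂ) • Finsupp.single i 1)

lemma sigmaGR_apply (i : B) (v : B →₀ ℂ) :
    sigmaGR M i v = v - (2 * phiGR M i v) • Finsupp.single i 1 := by
  unfold sigmaGR
  simp only [LinearMap.sub_apply, LinearMap.id_apply, LinearMap.smulRight_apply]
  rw [smul_smul, mul_comm]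

lemma phiGR_sigmaGR_self (i : B) (v : B →₀ ℂ) :
    phiGR M i (sigmaGR M i v) = - phiGR M i v := by
  rw [sigmaGR_apply, map_sub, map_smul, phiGR_single, one_mul, kM_self, smul_eq_mul]
  ring

lemma sigmaGR_sigmaGR (i : B) (v : B →₀ ℂ) :
    sigmaGR M i (sigmaGR M i v) = v := by
  rw [sigmaGR_apply i (sigmaGR M i v), phiGR_sigmaGR_self, sigmaGR_apply]
  module

set_option maxHeartbeats 1600000 in
/-- The dihedral relation for the geometric representation. -/
lemma sigmaGR_liftable : M.IsLiftable (sigmaGR M) := by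
  intro i j
  by_cases hij : i = j
  · subst hij
    rw [M.diagonal, pow_one]
    apply LinearMap.ext
    intro v
    rw [Module.End.mul_apply, Module.End.one_apply, sigmaGR_sigmaGR]
  rcases Nat.eq_zero_or_pos (M i j) with h0 | hpos
  · rw [h0, pow_zero]
  have hm2 : 2 ≤ M i j := by
    have := M.off_diagonal i j hij
    omega
  set m : ℕ := M i j with hmdef
  have hmR : (2:ℝ) ≤ (m:ℝ) := by exact_mod_cast hm2
  have hmne : (m:ℝ) ≠ 0 := by positivity
  set θ : ℝ := Real.pi / m with hθdef
  have hθpos : 0 < θ := div_pos Real.pi_pos (by linarith)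
  have hθltpi : θ < Real.pi := div_lt_self Real.pi_pos (by linarith)
  set z : ℂ := Complex.exp (θ * Complex.I) with hzdef
  have hz0 : z ≠ 0 := Complex.exp_ne_zero _
  have hzinv : z⁻¹ = Complex.exp (-((θ:ℂ) * Complex.I)) := by
    rw [hzdef, ← Complex.exp_neg]
  have hzsum : z + z⁻¹ = 2 * (Real.cos θ : ℂ) := by
    rw [hzdef, hzinv, neg_mul_eq_neg_mul, ← Complex.ofReal_neg, Complex.exp_mul_I,
      Complex.exp_mul_I, Complex.ofReal_neg, Complex.cos_neg, Complex.sin_neg,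
      Complex.ofReal_cos]
    ring
  have hzdiff : z - z⁻¹ = 2 * (Real.sin θ : ℂ) * Complex.I := by
    rw [hzdef, hzinv, neg_mul_eq_neg_mul, ← Complex.ofReal_neg, Complex.exp_mul_I,
      Complex.exp_mul_I, Complex.ofReal_neg, Complex.cos_neg, Complex.sin_neg,
      Complex.ofReal_sin]
    ring
  have hd : z - z⁻¹ ≠ 0 := by
    rw [hzdiff]
    have hsin : Real.sin θ ≠ 0 := ne_of_gt (Real.sin_pos_of_pos_of_lt_pi hθpos hθltpi)
    exact mul_ne_zero (mul_ne_zero two_ne_zero (by exact_mod_cast hsin)) Complex.I_ne_zero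
  have hk : kM M i j = -((z + z⁻¹)/2) := by
    rw [hzsum]
    unfold kM
    rw [← hmdef, ← hθdef]
    push_cast
    ring
  have hz2m : z ^ (2 * m) = 1 := by
    have harg : ((2 * m : ℕ):ℂ) * ((θ:ℂ) * Complex.I) = 2 * (Real.pi : ℂ) * Complex.I := by
      rw [hθdef]
      push_cast
      have : (m:ℂ) ≠ 0 := by exact_mod_cast hmne
      field_simp
    rw [hzdef, ← Complex.exp_nat_mul, harg, Complex.exp_two_pi_mul_I]
  have hzz : (z * z) ^ m = 1 := by
    rw [show z * z = z ^ 2 by ring, ← pow_mul]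
    exact hz2m
  have hzzinv : (z⁻¹ * z⁻¹) ^ m = 1 := by
    rw [show z⁻¹ * z⁻¹ = (z * z)⁻¹ by rw [mul_inv], inv_pow, hzz, inv_one]
  have hzu : z * z⁻¹ = 1 := mul_inv_cancel₀ hz0
  clear_value z
  clear hzdef hzinv hzsum hzdiff hz2m
  -- the two eigenvectors
  set ei : B →₀ ℂ := Finsupp.single i 1 with heidef
  set ej : B →₀ ℂ := Finsupp.single j 1 with hejdef
  clear_value ei ej
  set wp : B →₀ ℂ := ei + z • ej with hwpdef
  set wm : B →₀ ℂ := ei + z⁻¹ • ej with hwmdef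
  clear_value wp wm
  have hφii : phiGR M i ei = 1 := by rw [heidef, phiGR_single, kM_self, mul_one]
  have hφjj : phiGR M j ej = 1 := by rw [hejdef, phiGR_single, kM_self, mul_one]
  have hφij : phiGR M i ej = kM M i j := by rw [hejdef, phiGR_single, one_mul]
  have hφji : phiGR M j ei = kM M i j := by rw [heidef, phiGR_single, one_mul, kM_symm]
  have hφiwp : phiGR M i wp = 1 + z * kM M i j := by
    rw [hwpdef, map_add, map_smul, hφii, hφij, smul_eq_mul]
  have hφiwm : phiGR M i wm = 1 + z⁻¹ * kM M i j := by
    rw [hwmdef, map_add, map_smul, hφii, hφij, smul_eq_mul]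
  have hφjwp : phiGR M j wp = kM M i j + z := by
    rw [hwpdef, map_add, map_smul, hφji, hφjj, smul_eq_mul, mul_one]
  have hφjwm : phiGR M j wm = kM M i j + z⁻¹ := by
    rw [hwmdef, map_add, map_smul, hφji, hφjj, smul_eq_mul, mul_one]
  have hsjwp : sigmaGR M j wp = wm := by
    rw [sigmaGR_apply, hφjwp, ← hejdef, hwpdef, hwmdef]
    match_scalars
    · ring
    · rw [hk]; field_simp; ring
  have hsjwm : sigmaGR M j wm = wp := by
    rw [sigmaGR_apply, hφjwm, ← hejdef, hwmdef, hwpdef]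
    match_scalars
    · ring
    · rw [hk]; field_simp; ring
  have hsiwm : sigmaGR M i wm = (z⁻¹ * z⁻¹) • wp := by
    rw [sigmaGR_apply, hφiwm, ← heidef, hwmdef, hwpdef]
    match_scalars
    · rw [hk]; field_simp; ring
    · field_simp
  have hsiwp : sigmaGR M i wp = (z * z) • wm := by
    rw [sigmaGR_apply, hφiwp, ← heidef, hwpdef, hwmdef]
    match_scalars
    · rw [hk]; field_simp; ring
    · field_simp
  have hTwp : (sigmaGR M i * sigmaGR M j) wp = (z⁻¹ * z⁻¹) • wp := by
    rw [Module.End.mul_apply, hsjwp, hsiwm]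
  have hTwm : (sigmaGR M i * sigmaGR M j) wm = (z * z) • wm := by
    rw [Module.End.mul_apply, hsjwm, hsiwp]
  -- decomposition of an arbitrary vector
  apply LinearMap.ext
  intro v
  rw [Module.End.one_apply]
  set α : ℂ := phiGR M i v with hαdef
  set β : ℂ := phiGR M j v with hβdef
  set kk : ℂ := kM M i j with hkkdef
  clear_value α β kk
  set D : ℂ := (1 + z*kk)*(kk + z⁻¹) - (1 + z⁻¹*kk)*(kk + z) with hDdef
  clear_value D
  have h1 : 1 + z * kk = (1 - z*z)/2 := by
    rw [hk]; linear_combination (-(1:ℂ)/2) * hzu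
  have h2 : kk + z⁻¹ = -(z - z⁻¹)/2 := by rw [hk]; ring
  have h3 : 1 + z⁻¹ * kk = (1 - z⁻¹*z⁻¹)/2 := by
    rw [hk]; linear_combination (-(1:ℂ)/2) * hzu
  have h4 : kk + z = (z - z⁻¹)/2 := by rw [hk]; ring
  have hD0 : D ≠ 0 := by
    have hDval : D = (z - z⁻¹)^3 / 4 := by
      rw [hDdef, h1, h2, h3, h4]
      linear_combination ((z - z⁻¹)/2) * hzu
    rw [hDval]
    exact div_ne_zero (pow_ne_zero _ hd) (by norm_num)
  set A : ℂ := (α * (kk + z⁻¹) - β * (1 + z⁻¹*kk)) / D with hAdef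
  set Bc : ℂ := (β * (1 + z*kk) - α * (kk + z)) / D with hBdef
  clear_value A Bc
  have hDA : A * D = α * (kk + z⁻¹) - β * (1 + z⁻¹*kk) := by
    rw [hAdef, div_mul_cancel₀ _ hD0]
  have hDB : Bc * D = β * (1 + z*kk) - α * (kk + z) := by
    rw [hBdef, div_mul_cancel₀ _ hD0]
  rw [hDdef] at hDA hDB
  have hA : A * (1 + z*kk) + Bc * (1 + z⁻¹*kk) = α := by
    apply mul_right_cancel₀ hD0
    rw [hDdef]
    linear_combination (1 + z*kk) * hDA + (1 + z⁻¹*kk) * hDB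
  have hB : A * (kk + z) + Bc * (kk + z⁻¹) = β := by
    apply mul_right_cancel₀ hD0
    rw [hDdef]
    linear_combination (kk + z) * hDA + (kk + z⁻¹) * hDB
  set v0 : B →₀ ℂ := v - A • wp - Bc • wm with hv0def
  clear_value v0
  have hφi0 : phiGR M i v0 = 0 := by
    rw [hv0def, map_sub, map_sub, map_smul, map_smul, hφiwp, hφiwm, ← hαdef,
      smul_eq_mul, smul_eq_mul]
    linear_combination - hA
  have hφj0 : phiGR M j v0 = 0 := by
    rw [hv0def, map_sub, map_sub, map_smul, map_smul, hφjwp, hφjwm, ← hβdef,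
      smul_eq_mul, smul_eq_mul]
    linear_combination - hB
  have hsv0 : ∀ y : B, phiGR M y v0 = 0 → sigmaGR M y v0 = v0 := by
    intro y hy
    rw [sigmaGR_apply, hy, mul_zero, zero_smul, sub_zero]
  have hTv0 : (sigmaGR M i * sigmaGR M j) v0 = v0 := by
    rw [Module.End.mul_apply, hsv0 j hφj0, hsv0 i hφi0]
  have hpow : ∀ (T : Module.End ℂ (B →₀ ℂ)) (x : B →₀ ℂ) (c : ℂ), T x = c • x →
      ∀ n : ℕ, (T ^ n) x = c ^ n • x := by
    intro T x c hc n
    induction n with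
    | zero => simp
    | succ n ihn =>
      rw [pow_succ' T n, Module.End.mul_apply, ihn, map_smul, hc, smul_smul, pow_succ]
  have hvsum : v = v0 + A • wp + Bc • wm := by
    rw [hv0def]
    module
  calc ((sigmaGR M i * sigmaGR M j) ^ m) v
      = ((sigmaGR M i * sigmaGR M j) ^ m) (v0 + A • wp + Bc • wm) := by rw [← hvsum]
    _ = ((sigmaGR M i * sigmaGR M j) ^ m) v0
          + A • ((sigmaGR M i * sigmaGR M j) ^ m) wp
          + Bc • ((sigmaGR M i * sigmaGR M j) ^ m) wm := by
        rw [map_add, map_add, map_smul, map_smul]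
    _ = v0 + A • wp + Bc • wm := by
        have e0 : (sigmaGR M i * sigmaGR M j) v0 = (1:ℂ) • v0 := by rw [hTv0, one_smul]
        rw [hpow _ _ _ e0 m, hpow _ _ _ hTwp m, hpow _ _ _ hTwm m, one_pow, one_smul,
          hzzinv, hzz, one_smul, one_smul]
    _ = v := hvsum.symm

/-! ### The geometric representation homomorphism and consequences -/

def grP : W →* Module.End ℂ (B →₀ ℂ) := cs.lift ⟨sigmaGR M, sigmaGR_liftable⟩

lemma grP_simple (i : B) : grP cs (cs.simple i) = sigmaGR M i :=
  cs.lift_apply_simple sigmaGR_liftable i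

lemma grP_wordProd (ω : List B) : grP cs (cs.wordProd ω) = ((ω.map (sigmaGR M)).prod) := by
  induction ω with
  | nil => simp [cs.wordProd_nil]
  | cons i ω ih => rw [cs.wordProd_cons, map_mul, grP_simple, ih, List.map_cons, List.prod_cons]

lemma grP_coord (ω : List B) (v : B →₀ ℂ) (x : B) (hx : x ∉ ω) :
    (grP cs (cs.wordProd ω) v) x = v x := by
  rw [grP_wordProd]
  induction ω generalizing v with
  | nil => simp
  | cons i ω ih =>
    have hxi : x ≠ i := fun h => hx (h ▸ (List.mem_cons_self (a := i) (l := ω)))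
    have hxω : x ∉ ω := fun h => hx (List.mem_cons_of_mem i h)
    rw [List.map_cons, List.prod_cons, Module.End.mul_apply, sigmaGR_apply,
      Finsupp.sub_apply, Finsupp.smul_apply, Finsupp.single_apply, if_neg (Ne.symm hxi)]
    rw [ih _ hxω]
    simp

/-- The bilinear form. -/
def BfGR (M : CoxeterMatrix B) : (B →₀ ℂ) →ₗ[ℂ] (B →₀ ℂ) →ₗ[ℂ] ℂ :=
  Finsupp.linearCombination ℂ (fun x => phiGR M x)

lemma BfGR_single (x : B) (c : ℂ) (w : B →₀ ℂ) :
    BfGR M (Finsupp.single x c) w = c * phiGR M x w := by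
  unfold BfGR
  rw [Finsupp.linearCombination_single, LinearMap.smul_apply, smul_eq_mul]

lemma BfGR_single_right (v : B →₀ ℂ) (x : B) :
    BfGR M v (Finsupp.single x 1) = phiGR M x v := by
  induction v using Finsupp.induction_linear with
  | zero => simp
  | add f g hf hg => rw [map_add, LinearMap.add_apply, hf, hg, map_add]
  | single a b =>
    rw [BfGR_single, phiGR_single, phiGR_single, one_mul, kM_symm]

lemma BfGR_sigmaGR (y : B) (v w : B →₀ ℂ) :
    BfGR M (sigmaGR M y v) (sigmaGR M y w) = BfGR M v w := by
  have h3 : phiGR M y (Finsupp.single y 1) = 1 := by rw [phiGR_single, kM_self, mul_one]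
  rw [sigmaGR_apply, sigmaGR_apply]
  simp only [map_sub, map_smul, LinearMap.sub_apply, LinearMap.smul_apply, smul_eq_mul,
    BfGR_single_right, BfGR_single, h3]
  ring

lemma BfGR_word (ω : List B) (v w : B →₀ ℂ) :
    BfGR M (grP cs (cs.wordProd ω) v) (grP cs (cs.wordProd ω) w) = BfGR M v w := by
  rw [grP_wordProd]
  induction ω generalizing v w with
  | nil => simp
  | cons i ω ih =>
    rw [List.map_cons, List.prod_cons, Module.End.mul_apply, Module.End.mul_apply,
      BfGR_sigmaGR, ih]

/-! ### Extraction lemmas -/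

lemma M_eq_two_of_kM_zero (s0 t0 : B) (hne : s0 ≠ t0) (h : kM M s0 t0 = 0) : M s0 t0 = 2 := by
  unfold kM at h
  rw [neg_eq_zero, Complex.ofReal_eq_zero] at h
  by_contra hne2
  have h0 : M s0 t0 ≠ 0 := by
    intro h0
    rw [h0] at h
    norm_num at h
  have h1 : M s0 t0 ≠ 1 := M.off_diagonal s0 t0 hne
  have h3 : 3 ≤ M s0 t0 := by omega
  have hpos : (0:ℝ) < Real.cos (Real.pi / M s0 t0) := by
    apply Real.cos_pos_of_mem_Ioo
    constructor
    · have hq : 0 < Real.pi / (M s0 t0 : ℝ) :=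
        div_pos Real.pi_pos (by exact_mod_cast Nat.pos_of_ne_zero h0)
      have : 0 < Real.pi / 2 := by positivity
      linarith
    · exact div_lt_div_of_pos_left Real.pi_pos (by norm_num) (by exact_mod_cast (by omega : 2 < M s0 t0))
  rw [h] at hpos
  exact lt_irrefl 0 hpos

lemma sigmaGR_single_self (x : B) :
    sigmaGR M x (Finsupp.single x 1) = - Finsupp.single x 1 := by
  rw [sigmaGR_apply, phiGR_single, kM_self, mul_one, mul_one]
  module

lemma delta_neg (ρ : List B) (x : B) :
    grP cs (cs.wordProd ρ * cs.simple x * (cs.wordProd ρ)⁻¹)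
      (grP cs (cs.wordProd ρ) (Finsupp.single x 1))
    = - grP cs (cs.wordProd ρ) (Finsupp.single x 1) := by
  rw [map_mul, map_mul, Module.End.mul_apply, Module.End.mul_apply]
  have hone : grP cs (cs.wordProd ρ)⁻¹ * grP cs (cs.wordProd ρ) = 1 := by
    rw [← map_mul, inv_mul_cancel, map_one]
  have hid : grP cs (cs.wordProd ρ)⁻¹ (grP cs (cs.wordProd ρ) (Finsupp.single x 1))
      = Finsupp.single x 1 := by
    calc grP cs (cs.wordProd ρ)⁻¹ (grP cs (cs.wordProd ρ) (Finsupp.single x 1))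
        = (grP cs (cs.wordProd ρ)⁻¹ * grP cs (cs.wordProd ρ)) (Finsupp.single x 1) := rfl
      _ = Finsupp.single x 1 := by rw [hone, Module.End.one_apply]
  rw [hid, grP_simple, sigmaGR_single_self, map_neg]

lemma delta_s0_zero {s0 : B} {ρ : List B} (hρ : s0 ∉ ρ) {x : B} (hx : x ≠ s0) :
    (grP cs (cs.wordProd ρ) (Finsupp.single x 1)) s0 = 0 := by
  rw [grP_coord cs ρ _ s0 hρ, Finsupp.single_apply, if_neg hx]

lemma delta_B_one (ρ : List B) (x : B) :
    BfGR M (grP cs (cs.wordProd ρ) (Finsupp.single x 1))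
      (grP cs (cs.wordProd ρ) (Finsupp.single x 1)) = 1 := by
  rw [BfGR_word, BfGR_single, phiGR_single, kM_self]
  norm_num

lemma eq_smul_single_of_sigma_neg {y : B} {δ : B →₀ ℂ} (h : sigmaGR M y δ = -δ) :
    δ = phiGR M y δ • Finsupp.single y 1 := by
  rw [sigmaGR_apply] at h
  have h3 : (2:ℂ) • δ = (2:ℂ) • (phiGR M y δ • Finsupp.single y 1) := by
    linear_combination (norm := module) h
  exact smul_right_injective _ (two_ne_zero) h3

lemma no_simple_conj {s0 : B} {ρ : List B} (hρ : s0 ∉ ρ) {x : B} (hx : x ≠ s0)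
    (h : cs.simple s0 = cs.wordProd ρ * cs.simple x * (cs.wordProd ρ)⁻¹) : False := by
  set δ := grP cs (cs.wordProd ρ) (Finsupp.single x 1) with hδ
  have h1 : sigmaGR M s0 δ = -δ := by
    rw [← grP_simple cs s0, h, hδ]
    exact delta_neg cs ρ x
  have h2 := eq_smul_single_of_sigma_neg (M := M) h1
  have h3 : phiGR M s0 δ = 0 := by
    have h4 := congrArg (fun v : B →₀ ℂ => v s0) h2
    simp only [Finsupp.smul_apply, Finsupp.single_eq_same, smul_eq_mul, mul_one] at h4
    rw [hδ, delta_s0_zero cs hρ hx] at h4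
    exact h4.symm
  rw [h3, zero_smul] at h2
  have h5 : BfGR M δ δ = 1 := delta_B_one cs ρ x
  rw [h2] at h5
  simp at h5

lemma conj_M_eq_two {s0 t0 : B} (hts : t0 ≠ s0) {ρ : List B} (hρ : s0 ∉ ρ) {x : B}
    (hx : x ≠ s0)
    (h : cs.simple s0 * cs.simple t0 * cs.simple s0
        = cs.wordProd ρ * cs.simple x * (cs.wordProd ρ)⁻¹) :
    M s0 t0 = 2 := by
  set δ := grP cs (cs.wordProd ρ) (Finsupp.single x 1) with hδ
  have h1 : sigmaGR M s0 (sigmaGR M t0 (sigmaGR M s0 δ)) = -δ := by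
    have h0 := delta_neg cs ρ x
    rw [← h, ← hδ] at h0
    rw [map_mul, map_mul, grP_simple, grP_simple, Module.End.mul_apply,
      Module.End.mul_apply] at h0
    exact h0
  have h2 : sigmaGR M t0 (sigmaGR M s0 δ) = - (sigmaGR M s0 δ) := by
    have h4 := congrArg (sigmaGR M s0) h1
    rw [sigmaGR_sigmaGR, map_neg] at h4
    exact h4
  have h3 := eq_smul_single_of_sigma_neg (M := M) h2
  set c : ℂ := phiGR M t0 (sigmaGR M s0 δ) with hc
  have hδc : δ = c • sigmaGR M s0 (Finsupp.single t0 1) := by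
    have h5 : δ = sigmaGR M s0 (sigmaGR M s0 δ) := (sigmaGR_sigmaGR s0 δ).symm
    nth_rewrite 1 [h5]
    rw [h3, map_smul]
  have hσe : sigmaGR M s0 (Finsupp.single t0 1)
      = Finsupp.single t0 1 - (2 * kM M s0 t0) • Finsupp.single s0 1 := by
    rw [sigmaGR_apply, phiGR_single, one_mul]
  have hcoord : (0:ℂ) = c * (-(2 * kM M s0 t0)) := by
    have h0 : δ s0 = 0 := by rw [hδ]; exact delta_s0_zero cs hρ hx
    have h6 := congrArg (fun v : B →₀ ℂ => v s0) hδc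
    rw [h0, hσe] at h6
    rw [Finsupp.smul_apply, Finsupp.sub_apply, Finsupp.smul_apply, Finsupp.single_eq_same,
      Finsupp.single_apply, if_neg hts, smul_eq_mul, smul_eq_mul, mul_one, zero_sub] at h6
    exact h6
  have hc0 : c ≠ 0 := by
    intro hcc
    rw [hcc, zero_smul] at hδc
    have h7 : BfGR M δ δ = 1 := delta_B_one cs ρ x
    rw [hδc] at h7
    simp at h7
  have hk0 : kM M s0 t0 = 0 := by
    rcases mul_eq_zero.mp hcoord.symm with h8 | h8
    · exact absurd h8 hc0
    · have := neg_eq_zero.mp h8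
      have h9 : (2:ℂ) ≠ 0 := two_ne_zero
      rcases mul_eq_zero.mp this with h10 | h10
      · exact absurd h10 h9
      · exact h10
  exact M_eq_two_of_kM_zero s0 t0 (Ne.symm hts) hk0

/-! ### Main theorem -/

lemma simple_commute_of_M_eq_two {s0 t0 : B} (h : M s0 t0 = 2) :
    cs.simple s0 * cs.simple t0 = cs.simple t0 * cs.simple s0 := by
  have hp := cs.simple_mul_simple_pow s0 t0
  rw [h, pow_two] at hp
  have h2 : cs.simple s0 * cs.simple t0 = (cs.simple s0 * cs.simple t0)⁻¹ :=
    eq_inv_of_mul_eq_one_left hp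
  rw [h2, mul_inv_rev, cs.inv_simple, cs.inv_simple]

lemma lis_entry_form (ω : List B) {s0 : B} (hs : s0 ∉ ω) {r : W}
    (hmem : r ∈ cs.leftInvSeq ω) :
    ∃ (ρ : List B) (x : B), s0 ∉ ρ ∧ x ≠ s0 ∧
      r = cs.wordProd ρ * cs.simple x * (cs.wordProd ρ)⁻¹ := by
  obtain ⟨jj, hj, hget⟩ := List.mem_iff_getElem.mp hmem
  have hj' : jj < ω.length := by simpa using hj
  have hgd : (cs.leftInvSeq ω).getD jj 1 = r := by
    rw [List.getD_eq_getElem _ 1 hj, hget]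
  rw [cs.getD_leftInvSeq] at hgd
  have hsome : ω[jj]? = some (ω[jj]'hj') := by
    rw [List.getElem?_eq_getElem hj']
  rw [hsome] at hgd
  refine ⟨ω.take jj, ω[jj]'hj', ?_, ?_, ?_⟩
  · intro hmem2
    exact hs (List.mem_of_mem_take hmem2)
  · intro heq
    exact hs (heq ▸ List.getElem_mem hj')
  · rw [← hgd]
    rfl

theorem main_commuting (s0 : B) (w : List B) (hs : s0 ∉ w) (hred : cs.IsReduced w)
    (hcomm : Commute (cs.simple s0) (cs.wordProd w)) : ∀ t ∈ w, M s0 t = 2 := by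
  induction w with
  | nil => intro t ht; simp at ht
  | cons t rest ih =>
    have hts : t ≠ s0 := fun h => hs (h ▸ (List.mem_cons_self (a := t) (l := rest)))
    have hsrest : s0 ∉ rest := fun h => hs (List.mem_cons_of_mem t h)
    -- no occurrence of `s0` in the left inversion sequence of `t :: rest`
    have hnotin : cs.simple s0 ∉ cs.leftInvSeq (t :: rest) := by
      intro hmem
      obtain ⟨ρ, x, hρ, hx, heq⟩ := lis_entry_form cs (t :: rest) hs hmem
      exact no_simple_conj cs hρ hx heq
    -- Step 1 : length goes up
    have hstep : ¬ cs.IsLeftInversion (cs.wordProd (t :: rest)) (cs.simple s0) := fun h =>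
      hnotin (mem_leftInvSeq_of_isLeftInversion cs h _ rfl)
    have hlen : cs.length (cs.simple s0 * cs.wordProd (t :: rest))
        = cs.length (cs.wordProd (t :: rest)) + 1 := by
      rcases cs.length_simple_mul (cs.wordProd (t :: rest)) s0 with h | h
      · exact h
      · exact absurd ⟨cs.isReflection_simple s0, by omega⟩ hstep
    have hτ : cs.IsReduced (s0 :: t :: rest) := by
      have : cs.length (cs.wordProd (s0 :: t :: rest)) = (s0 :: t :: rest).length := by
        rw [cs.wordProd_cons, hlen, hred]
        simp
      exact this
    -- the reflection s0 * t * s0 is a left inversion of the product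
    have hrget : (cs.leftInvSeq (s0 :: t :: rest)).getD 1 1
        = cs.simple s0 * cs.simple t * cs.simple s0 := by
      rw [cs.getD_leftInvSeq]
      simp [cs.inv_simple]
    have hrmem : cs.simple s0 * cs.simple t * cs.simple s0
        ∈ cs.leftInvSeq (s0 :: t :: rest) := by
      rw [← hrget]
      have hlen2 : 1 < (cs.leftInvSeq (s0 :: t :: rest)).length := by simp
      rw [List.getD_eq_getElem _ 1 hlen2]
      exact List.getElem_mem _
    have hrinv : cs.IsLeftInversion (cs.wordProd (s0 :: t :: rest))
        (cs.simple s0 * cs.simple t * cs.simple s0) :=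
      cs.isLeftInversion_of_mem_leftInvSeq hτ hrmem
    -- transfer to the word (t :: rest) ++ [s0]
    have hπeq : cs.wordProd ((t :: rest).concat s0) = cs.wordProd (s0 :: t :: rest) := by
      rw [cs.wordProd_concat, cs.wordProd_cons]
      exact hcomm.eq.symm
    have hrmem2 : cs.simple s0 * cs.simple t * cs.simple s0
        ∈ cs.leftInvSeq ((t :: rest).concat s0) :=
      mem_leftInvSeq_of_isLeftInversion cs hrinv _ hπeq
    rw [cs.leftInvSeq_concat] at hrmem2
    have hM2 : M s0 t = 2 := by
      rw [List.concat_eq_append] at hrmem2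
      rcases List.mem_append.mp hrmem2 with hin | hlast'
      · obtain ⟨ρ, x, hρ, hx, heq⟩ := lis_entry_form cs (t :: rest) hs hin
        exact conj_M_eq_two cs hts hρ hx heq
      · have hlast := List.mem_singleton.mp hlast'
        exfalso
        have hu : cs.wordProd (t :: rest) * cs.simple s0 * (cs.wordProd (t :: rest))⁻¹
            = cs.simple s0 := by
          rw [← hcomm.eq, mul_assoc, mul_inv_cancel, mul_one]
        rw [hu] at hlast
        have hsimp : cs.simple t = cs.simple s0 := (simple_conj_eq_iff cs s0 _).mp hlast
        have hhead : cs.simple t ∈ cs.leftInvSeq (t :: rest) := by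
          have : cs.leftInvSeq (t :: rest)
              = cs.simple t :: List.map (MulAut.conj (cs.simple t)) (cs.leftInvSeq rest) := rfl
          rw [this]
          exact List.mem_cons_self
        rw [hsimp] at hhead
        exact hnotin hhead
    have hcs := simple_commute_of_M_eq_two cs hM2
    have hrest : Commute (cs.simple s0) (cs.wordProd rest) := by
      have hu2 : cs.wordProd rest = cs.simple t * cs.wordProd (t :: rest) := by
        rw [cs.wordProd_cons, ← mul_assoc, cs.simple_mul_simple_self, one_mul]
      show cs.simple s0 * cs.wordProd rest = cs.wordProd rest * cs.simple s0
      rw [hu2, ← mul_assoc, hcs, mul_assoc, hcomm.eq, ← mul_assoc]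
    have hredrest : cs.IsReduced rest := by
      have := hred.drop 1
      simpa using this
    intro t' ht'
    rcases List.mem_cons.mp ht' with h | h
    · rw [h]; exact hM2
    · exact ih hsrest hredrest hrest t' h

end

end CoxLemma52

/-- **Lemma 5.2.** In a Coxeter system, if `s` is a generator and `w` is a reduced word in the
generators other than `s` representing an element commuting with `s`, then every letter of `w`
commutes with `s`, i.e. has Coxeter matrix entry `2` with `s`. -/
theorem letters_commute_of_reduced_commuting {B W : Type*} [Group W]
    {M : CoxeterMatrix B} (cs : CoxeterSystem M W)
    (s : B) (w : List B) (hs : s ∉ w)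
    (hred : cs.IsReduced w)
    (hcomm : Commute (cs.simple s) (cs.wordProd w)) :
    ∀ t ∈ w, M s t = 2 :=
  CoxLemma52.main_commuting cs s w hs hred hcomm
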